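/- The function φ(z) = log(1/|z|) on the unit disk in ℂ has finite mean oscillation at the origin, while its mean values φ̃_ε(0) over B(0,ε) tend to +∞ as ε → 0. In particular, the sufficient condition limsup_{ε→0} ⨍_{B(0,ε)} |φ| dm < ∞ for FMO is not necessary. -/

import Mathlib

open MeasureTheory Metric Filter Set
open scoped ENNReal Topology

/-- `φ` has finite mean oscillation at `z₀`. -/
def FMOAt (φ : ℂ → ℝ) (z₀ : ℂ) : Prop :=
  ∃ C : ℝ, ∀ᶠ ε in 𝓝[>] (0 : ℝ),
    (⨍ z in ball z₀ ε, |φ z - ⨍ w in ball z₀ ε, φ w ∂volume| ∂volume) ≤ C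

lemma meas_phi : Measurable (fun z : ℂ => Real.log (1 / ‖z‖)) := by
  simp only [one_div]
  exact Real.measurable_log.comp continuous_norm.measurable.inv

lemma phi_nonneg {ε : ℝ} (hε1 : ε ≤ 1) {z : ℂ} (hz : z ∈ ball (0:ℂ) ε) :
    0 ≤ Real.log (1 / ‖z‖) := by
  rcases eq_or_ne z 0 with rfl | hz0
  · simp
  · apply Real.log_nonneg
    rw [le_div_iff₀ (by simpa using hz0), one_mul]
    rw [mem_ball_zero_iff] at hz
    calc ‖z‖ = ‖z‖ := rfl
    _ ≤ 1 := le_of_lt (lt_of_lt_of_le hz hε1)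

lemma integrableOn_phi {ε : ℝ} (hε : 0 < ε) (hε1 : ε ≤ 1) :
    IntegrableOn (fun z : ℂ => Real.log (1 / ‖z‖)) (ball (0:ℂ) ε) volume := by
  refine ⟨(meas_phi.aestronglyMeasurable).restrict, ?_⟩
  rw [hasFiniteIntegral_iff_norm]
  have h1 : ∀ᵐ z ∂(volume.restrict (ball (0:ℂ) ε)),
      ENNReal.ofReal ‖Real.log (1 / ‖z‖)‖ =
      ENNReal.ofReal (Real.log (1 / ‖z‖)) := by
    filter_upwards [ae_restrict_mem measurableSet_ball] with z hz
    rw [Real.norm_eq_abs, abs_of_nonneg (phi_nonneg hε1 hz)]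
  rw [lintegral_congr_ae h1,
    lintegral_eq_lintegral_meas_le _ ?_ (meas_phi.aemeasurable.restrict)]
  · calc ∫⁻ t in Ioi 0, (volume.restrict (ball (0:ℂ) ε))
          {a | t ≤ Real.log (1 / ‖a‖)}
        ≤ ∫⁻ t in Ioi 0, ENNReal.ofReal (Real.pi * Real.exp (-2 * t)) := by
          apply setLIntegral_mono' measurableSet_Ioi
          intro t ht
          have hsub : {a : ℂ | t ≤ Real.log (1 / ‖a‖)} ∩ ball 0 ε ⊆
              closedBall (0:ℂ) (Real.exp (-t)) := by
            rintro a ⟨ha, -⟩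
            simp only [mem_setOf_eq] at ha
            rcases eq_or_ne a 0 with rfl | ha0
            · simp [Real.exp_nonneg]
            · rw [mem_closedBall_zero_iff]
              have habs : (0:ℝ) < ‖a‖ := by simpa using ha0
              rw [one_div, Real.log_inv] at ha
              have : Real.log (‖a‖) ≤ -t := by linarith
              calc ‖a‖ = ‖a‖ := rfl
              _ ≤ Real.exp (-t) := by
                  rw [← Real.exp_log habs]; exact Real.exp_le_exp.2 this
          calc (volume.restrict (ball (0:ℂ) ε)) {a | t ≤ Real.log (1 / ‖a‖)}
              = volume ({a : ℂ | t ≤ Real.log (1 / ‖a‖)} ∩ ball 0 ε) := by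
                rw [Measure.restrict_apply' measurableSet_ball]
          _ ≤ volume (closedBall (0:ℂ) (Real.exp (-t))) := measure_mono hsub
          _ = ENNReal.ofReal (Real.exp (-t)) ^ 2 * NNReal.pi := by
                rw [Complex.volume_closedBall]
          _ = ENNReal.ofReal (Real.pi * Real.exp (-2 * t)) := by
                have h2 : Real.exp (-t) ^ 2 = Real.exp (-2 * t) := by
                  rw [pow_two, ← Real.exp_add]; ring_nf
                have h3 : (NNReal.pi : ℝ≥0∞) = ENNReal.ofReal Real.pi := by
                  rw [← NNReal.coe_real_pi, ENNReal.ofReal_coe_nnreal]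
                rw [← ENNReal.ofReal_pow (Real.exp_nonneg _), h2, h3,
                  ← ENNReal.ofReal_mul (Real.exp_nonneg _), mul_comm]
    _ < ∞ := by
          apply IntegrableOn.setLIntegral_lt_top
          exact (exp_neg_integrableOn_Ioi 0 (by norm_num : (0:ℝ) < 2)).const_mul Real.pi
  · filter_upwards [ae_restrict_mem measurableSet_ball] with z hz
    exact phi_nonneg hε1 hz

lemma I1 {ε : ℝ} (hε : 0 < ε) :
    ∫ r in (0:ℝ)..ε, (r * Real.log ε - r * Real.log r) = ε^2/4 := by
  have hG : ∀ x ∈ Ioo (0:ℝ) ε, HasDerivAt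
      (fun r : ℝ => r^2 * Real.log ε / 2 - r * (r * Real.log r) / 2 + r^2/4)
      (x * Real.log ε - x * Real.log x) x := by
    intro x hx
    have hx0 : x ≠ 0 := ne_of_gt hx.1
    have h1 : HasDerivAt (fun r : ℝ => r^2 * Real.log ε / 2) (x * Real.log ε) x := by
      have := ((hasDerivAt_pow 2 x).mul_const (Real.log ε)).div_const 2
      refine this.congr_deriv ?_; norm_num; ring
    have h2 : HasDerivAt (fun r : ℝ => r * (r * Real.log r) / 2)
        ((2 * x * Real.log x + x) / 2) x := by
      have hlog : HasDerivAt (fun r : ℝ => r * Real.log r) (Real.log x + 1) x := by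
        have := (hasDerivAt_id x).mul (Real.hasDerivAt_log hx0)
        refine this.congr_deriv ?_
        simp [hx0]
      have := ((hasDerivAt_id x).mul hlog).div_const 2
      refine this.congr_deriv ?_
      simp; ring
    have h3 : HasDerivAt (fun r : ℝ => r^2/4) (x/2) x := by
      have := (hasDerivAt_pow 2 x).div_const 4
      refine this.congr_deriv ?_; norm_num; ring
    have := (h1.sub h2).add h3
    refine this.congr_deriv ?_; ring
  have hcont : ContinuousOn
      (fun r : ℝ => r^2 * Real.log ε / 2 - r * (r * Real.log r) / 2 + r^2/4)
      (Icc 0 ε) := by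
    apply Continuous.continuousOn
    have := Real.continuous_mul_log
    continuity
  have hint : IntervalIntegrable (fun r : ℝ => r * Real.log ε - r * Real.log r)
      volume 0 ε := by
    apply Continuous.intervalIntegrable
    exact (continuous_id.mul continuous_const).sub Real.continuous_mul_log
  rw [intervalIntegral.integral_eq_sub_of_hasDerivAt_of_le hε.le hcont hG hint]
  simp [Real.log_zero]
  ring

lemma I3 {ε : ℝ} (hε : 0 < ε) :
    ∫ z in ball (0:ℂ) ε, Real.log (ε / ‖z‖) = Real.pi * ε^2 / 2 := by
  have hfun : (fun z : ℂ => (ball (0:ℂ) ε).indicator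
        (fun z => Real.log (ε / ‖z‖)) z) =
      fun z : ℂ => (Ico (0:ℝ) ε).indicator (fun r => Real.log (ε / r)) ‖z‖ := by
    funext z
    by_cases hz : z ∈ ball (0:ℂ) ε
    · rw [indicator_of_mem hz, indicator_of_mem (by
        exact ⟨norm_nonneg z, by rwa [← mem_ball_zero_iff]⟩)]
    · rw [indicator_of_notMem hz, indicator_of_notMem (by
        intro h; exact hz (mem_ball_zero_iff.2 h.2))]
  rw [← integral_indicator measurableSet_ball, hfun,
    MeasureTheory.integral_fun_norm_addHaar volume
      (fun r => (Ico (0:ℝ) ε).indicator (fun r => Real.log (ε / r)) r)]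
  have hIoi : ∫ r in Ioi (0:ℝ),
      r ^ (Module.finrank ℝ ℂ - 1) • (Ico (0:ℝ) ε).indicator (fun r => Real.log (ε / r)) r
      = ε^2/4 := by
    simp only [Complex.finrank_real_complex, Nat.reduceSub, pow_one, smul_eq_mul]
    have : ∀ r : ℝ, r * (Ico (0:ℝ) ε).indicator (fun r => Real.log (ε / r)) r
        = (Ico (0:ℝ) ε).indicator (fun r => r * Real.log (ε / r)) r := by
      intro r
      by_cases hr : r ∈ Ico (0:ℝ) ε
      · rw [indicator_of_mem hr, indicator_of_mem hr]
      · rw [indicator_of_notMem hr, indicator_of_notMem hr, mul_zero]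
    simp_rw [this]
    rw [integral_indicator measurableSet_Ico, Measure.restrict_restrict measurableSet_Ico]
    have hset : Ico (0:ℝ) ε ∩ Ioi 0 = Ioo 0 ε := by
      ext x
      simp only [mem_inter_iff, mem_Ico, mem_Ioi, mem_Ioo]
      constructor
      · rintro ⟨⟨-, h2⟩, h3⟩; exact ⟨h3, h2⟩
      · rintro ⟨h1, h2⟩; exact ⟨⟨h1.le, h2⟩, h1⟩
    rw [hset]
    have hcongr : ∫ r in Ioo (0:ℝ) ε, r * Real.log (ε / r)
        = ∫ r in Ioo (0:ℝ) ε, (r * Real.log ε - r * Real.log r) := by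
      apply setIntegral_congr_fun measurableSet_Ioo
      intro r hr
      show r * Real.log (ε / r) = r * Real.log ε - r * Real.log r
      rw [Real.log_div (ne_of_gt hε) (ne_of_gt hr.1)]
      ring
    rw [hcongr, ← MeasureTheory.integral_Ioc_eq_integral_Ioo,
      ← intervalIntegral.integral_of_le hε.le, I1 hε]
  rw [hIoi]
  have hvol : volume.real (ball (0:ℂ) 1) = Real.pi := by
    rw [measureReal_def, Complex.volume_ball]
    simp [ENNReal.toReal_mul]
  rw [hvol]
  simp only [Complex.finrank_real_complex, smul_eq_mul, nsmul_eq_mul]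
  ring

lemma ae_ne_zero_ball {ε : ℝ} :
    ∀ᵐ z : ℂ ∂(volume.restrict (ball (0:ℂ) ε)), z ≠ 0 := by
  apply ae_restrict_of_ae
  rw [ae_iff]
  have : {z : ℂ | ¬ z ≠ 0} = {0} := by ext z; simp
  rw [this]
  exact measure_singleton 0

lemma integrableOn_logdiv {ε : ℝ} (hε : 0 < ε) (hε1 : ε ≤ 1) :
    IntegrableOn (fun z : ℂ => Real.log (ε / ‖z‖)) (ball (0:ℂ) ε) volume := by
  apply Integrable.congr
    ((integrableOn_const measure_ball_lt_top.ne
      : IntegrableOn (fun _ : ℂ => Real.log ε) (ball (0:ℂ) ε) volume).add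
      (integrableOn_phi hε hε1))
  filter_upwards [ae_ne_zero_ball] with z hz
  show Real.log ε + Real.log (1 / ‖z‖) = Real.log (ε / ‖z‖)
  rw [one_div, Real.log_inv, Real.log_div hε.ne' (by simpa using hz)]
  ring

lemma vol_toReal {ε : ℝ} (hε : 0 < ε) :
    volume.real (ball (0:ℂ) ε) = ε^2 * Real.pi := by
  rw [measureReal_def, Complex.volume_ball]
  simp [ENNReal.toReal_mul, ENNReal.toReal_pow, ENNReal.toReal_ofReal hε.le]

lemma avg_logdiv {ε : ℝ} (hε : 0 < ε) :
    ⨍ z in ball (0:ℂ) ε, Real.log (ε / ‖z‖) ∂volume = 1/2 := by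
  rw [setAverage_eq, I3 hε, vol_toReal hε, smul_eq_mul]
  field_simp

lemma avg_phi {ε : ℝ} (hε : 0 < ε) (hε1 : ε ≤ 1) :
    ⨍ z in ball (0:ℂ) ε, Real.log (1 / ‖z‖) ∂volume
      = Real.log (1/ε) + 1/2 := by
  have hae : (fun z : ℂ => Real.log (1 / ‖z‖)) =ᵐ[volume.restrict (ball (0:ℂ) ε)]
      (fun z => Real.log (1/ε) + Real.log (ε / ‖z‖)) := by
    filter_upwards [ae_ne_zero_ball] with z hz
    rw [Real.log_div hε.ne' (by simpa using hz), one_div, one_div, Real.log_inv, Real.log_inv]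
    ring
  rw [average_congr hae, setAverage_eq,
    integral_add (integrableOn_const measure_ball_lt_top.ne : IntegrableOn (fun _ : ℂ => Real.log (1/ε)) (ball (0:ℂ) ε) volume) (integrableOn_logdiv hε hε1),
    setIntegral_const, I3 hε, vol_toReal hε, smul_eq_mul, smul_eq_mul]
  have hπ := Real.pi_ne_zero
  field_simp

/-- Remark 6.1: `φ(z) = log(1/|z|)` has finite mean oscillation at the origin, yet its
mean values over `B(0,ε)` tend to `+∞` as `ε → 0`; in particular, boundedness of the
averages of `|φ|` is sufficient but not necessary for FMO. -/
theorem log_one_div_abs_fmo_at_zero :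
    FMOAt (fun z : ℂ => Real.log (1 / ‖z‖)) 0 ∧
    Tendsto (fun ε : ℝ =>
        ⨍ z in ball (0 : ℂ) ε, Real.log (1 / ‖z‖) ∂volume)
      (𝓝[>] (0 : ℝ)) atTop ∧
    ¬ (∃ C : ℝ, ∀ᶠ ε in 𝓝[>] (0 : ℝ),
        (⨍ z in ball (0 : ℂ) ε, |Real.log (1 / ‖z‖)| ∂volume) ≤ C) := by
  have hmem : Ioo (0:ℝ) 1 ∈ 𝓝[>] (0:ℝ) := Ioo_mem_nhdsGT_of_mem ⟨le_refl 0, zero_lt_one⟩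
  have t1 : Tendsto (fun ε : ℝ => Real.log (1/ε) + 1/2) (𝓝[>] (0:ℝ)) atTop := by
    apply tendsto_atTop_add_const_right
    have : Tendsto (fun ε : ℝ => -Real.log ε) (𝓝[>] (0:ℝ)) atTop :=
      tendsto_neg_atBot_atTop.comp Real.tendsto_log_nhdsGT_zero
    refine this.congr fun ε => ?_
    rw [one_div, Real.log_inv]
  have havg : ∀ᶠ ε in 𝓝[>] (0:ℝ),
      ⨍ z in ball (0:ℂ) ε, Real.log (1 / ‖z‖) ∂volume = Real.log (1/ε) + 1/2 := by
    filter_upwards [hmem] with ε hε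
    exact avg_phi hε.1 hε.2.le
  have t2 : Tendsto (fun ε : ℝ =>
      ⨍ z in ball (0 : ℂ) ε, Real.log (1 / ‖z‖) ∂volume) (𝓝[>] (0:ℝ)) atTop :=
    t1.congr' (havg.mono fun ε h => h.symm)
  refine ⟨⟨1, ?_⟩, t2, ?_⟩
  · filter_upwards [hmem] with ε hε
    obtain ⟨hε0, hε1⟩ := hε

    rw [avg_phi hε0 hε1.le]
    have hconst : IntegrableOn (fun _ : ℂ => (1:ℝ)/2) (ball (0:ℂ) ε) volume :=
      integrableOn_const measure_ball_lt_top.ne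
    have hconst2 : IntegrableOn (fun _ : ℂ => Real.log (1/ε) + 1/2) (ball (0:ℂ) ε) volume :=
      integrableOn_const measure_ball_lt_top.ne
    have hint1 : IntegrableOn
        (fun z : ℂ => |Real.log (1 / ‖z‖) - (Real.log (1/ε) + 1/2)|)
        (ball (0:ℂ) ε) volume :=
      ((integrableOn_phi hε0 hε1.le).sub hconst2).abs
    have hint2 : IntegrableOn (fun z : ℂ => Real.log (ε / ‖z‖) + 1/2)
        (ball (0:ℂ) ε) volume :=
      (integrableOn_logdiv hε0 hε1.le).add hconst
    have hmono : ∀ᵐ z ∂(volume.restrict (ball (0:ℂ) ε)),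
        |Real.log (1 / ‖z‖) - (Real.log (1/ε) + 1/2)|
          ≤ Real.log (ε / ‖z‖) + 1/2 := by
      filter_upwards [ae_ne_zero_ball, ae_restrict_mem measurableSet_ball] with z hz hzb
      have habs : (0:ℝ) < ‖z‖ := by simpa using hz
      have hzlt : ‖z‖ < ε := by rwa [mem_ball_zero_iff] at hzb
      have hL : 0 ≤ Real.log (ε / ‖z‖) :=
        Real.log_nonneg ((one_le_div habs).2 hzlt.le)
      have heq : Real.log (1 / ‖z‖) - (Real.log (1/ε) + 1/2)
          = Real.log (ε / ‖z‖) - 1/2 := by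
        rw [Real.log_div hε0.ne' habs.ne', one_div, one_div, Real.log_inv, Real.log_inv]
        ring
      rw [heq]
      exact abs_le.2 ⟨by linarith, by linarith⟩
    calc ⨍ z in ball (0:ℂ) ε,
            |Real.log (1 / ‖z‖) - (Real.log (1/ε) + 1/2)| ∂volume
        ≤ ⨍ z in ball (0:ℂ) ε, (Real.log (ε / ‖z‖) + 1/2) ∂volume := by
          rw [setAverage_eq, setAverage_eq]
          exact smul_le_smul_of_nonneg_left (integral_mono_ae hint1 hint2 hmono)
            (inv_nonneg.2 ENNReal.toReal_nonneg)
    _ = 1 := by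
          rw [setAverage_eq, integral_add (integrableOn_logdiv hε0 hε1.le) hconst,
            I3 hε0, setIntegral_const, vol_toReal hε0, smul_eq_mul, smul_eq_mul]
          have hπ := Real.pi_ne_zero
          field_simp
          ring
  · rintro ⟨C, hC⟩
    have habs : ∀ᶠ ε in 𝓝[>] (0:ℝ),
        (⨍ z in ball (0:ℂ) ε, |Real.log (1 / ‖z‖)| ∂volume)
          = Real.log (1/ε) + 1/2 := by
      filter_upwards [hmem] with ε hε
      rw [← avg_phi hε.1 hε.2.le]
      apply average_congr
      filter_upwards [ae_restrict_mem measurableSet_ball] with z hz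
      exact abs_of_nonneg (phi_nonneg hε.2.le hz)
    have hbig : ∀ᶠ ε in 𝓝[>] (0:ℝ), C < Real.log (1/ε) + 1/2 := t1.eventually_gt_atTop C
    obtain ⟨ε, h1, h2, h3⟩ := (hC.and (habs.and hbig)).exists
    rw [h2] at h1
    linarith
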